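/- Every 3×3 signed permutation matrix maps the Peres set PS to itself (as a set of rays); moreover, for any two rays u, v ∈ PS whose spanning vectors have the same multiset of absolute values of coordinates (i.e. u and v are of the same type), there exists a 3×3 signed permutation matrix g such that g maps the ray u to the ray v. -/

import Mathlib

noncomputable section

/-- Vectors in `ℝ³`. -/
abbrev V3 : Type := Fin 3 → ℝ

/-- The standard inner product on `ℝ³`. -/
def dot3 (x y : V3) : ℝ := x 0 * y 0 + x 1 * y 1 + x 2 * y 2

/-- The multiset of absolute values of the coordinates of a vector in `ℝ³`. -/
def absCoords (x : V3) : Multiset ℝ := {|x 0|, |x 1|, |x 2|}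

/-- The Peres set `PS`: the 33 rays (1-dimensional linear subspaces) of `ℝ³` spanned by
nonzero vectors whose multiset of absolute values of coordinates is one of
`{0,0,1}`, `{0,1,1}`, `{0,1,2}`, `{1,1,2}`. -/
def PeresSet : Set (Submodule ℝ V3) :=
  {L | ∃ v : V3, v ≠ 0 ∧ L = Submodule.span ℝ {v} ∧
    (absCoords v = {0, 0, 1} ∨ absCoords v = {0, 1, 1} ∨
      absCoords v = {0, 1, 2} ∨ absCoords v = {1, 1, 2})}

/-- Two rays are orthogonal if their elements are orthogonal for the standard
inner product on `ℝ³`. -/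
def RayOrtho (L M : Submodule ℝ V3) : Prop := ∀ x ∈ L, ∀ y ∈ M, dot3 x y = 0

/-- Three mutually orthogonal rays. -/
def MutuallyOrtho (L M N : Submodule ℝ V3) : Prop :=
  RayOrtho L M ∧ RayOrtho L N ∧ RayOrtho M N

/-- The two colours. -/
inductive Colour : Type
  | green
  | red
deriving DecidableEq

/-- A colouring of the Peres set. -/
def Colouring : Type := {L : Submodule ℝ V3 // L ∈ PeresSet} → Colour

/-- The PKS events: subsets of the space `Ω` of colourings of the form
`R_B` (all three rays of a triple `B` of mutually orthogonal rays of `PS` coloured red)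
or `G_P` (both rays of an orthogonal pair `P` in `PS` coloured green). -/
def IsPKSEvent (E : Set Colouring) : Prop :=
  (∃ u v w : {L : Submodule ℝ V3 // L ∈ PeresSet}, MutuallyOrtho u.1 v.1 w.1 ∧
      E = {γ : Colouring | γ u = Colour.red ∧ γ v = Colour.red ∧ γ w = Colour.red}) ∨
  (∃ u v : {L : Submodule ℝ V3 // L ∈ PeresSet}, RayOrtho u.1 v.1 ∧
      E = {γ : Colouring | γ u = Colour.green ∧ γ v = Colour.green})

/-- The multiplicative co-event `A*` with support `A`: `A*(B) = 1` iff `A ⊆ B`. -/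
def coevent (A : Set Colouring) : Set Colouring → ZMod 2 :=
  open scoped Classical in fun B => if A ⊆ B then 1 else 0


/-- A `3 × 3` signed permutation matrix: a permutation matrix with some entries negated. -/
def IsSignedPerm (g : Matrix (Fin 3) (Fin 3) ℝ) : Prop :=
  ∃ σ : Equiv.Perm (Fin 3), ∃ ε : Fin 3 → ℝ, (∀ i, ε i = 1 ∨ ε i = -1) ∧
    ∀ i j, g i j = if j = σ i then ε i else 0


lemma perm_univ_val (σ : Equiv.Perm (Fin 3)) :
    (Finset.univ.val.map σ : Multiset (Fin 3)) = Finset.univ.val := by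
  simpa using congrArg Finset.val (Finset.map_univ_equiv σ)

lemma tri_rot (a b c : ℝ) : ({a, b, c} : Multiset ℝ) = {c, a, b} := by
  have h1 : ({a, b, c} : Multiset ℝ) = ↑[a, b, c] := rfl
  have h2 : ({c, a, b} : Multiset ℝ) = ↑[c, a, b] := rfl
  rw [h1, h2]
  exact Multiset.coe_eq_coe.mpr
    (((List.Perm.cons a (List.Perm.swap c b [])).trans (List.Perm.swap a c [b]).symm))

lemma lemA (f : Fin 3 → ℝ) (σ : Equiv.Perm (Fin 3)) :
    ({f (σ 0), f (σ 1), f (σ 2)} : Multiset ℝ) = {f 0, f 1, f 2} := by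
  have h0 : (Finset.univ.val : Multiset (Fin 3)) = {0, 1, 2} := by decide
  have h1 : ({f (σ 0), f (σ 1), f (σ 2)} : Multiset ℝ)
      = Multiset.map f (Multiset.map σ {0,1,2}) := by
    simp
  rw [h1, ← h0, perm_univ_val, h0]
  simp

lemma pair_eq (p q r s : ℝ) (h : ({p, q} : Multiset ℝ) = {r, s}) :
    (r = p ∧ s = q) ∨ (r = q ∧ s = p) := by
  have hr : r ∈ ({p, q} : Multiset ℝ) := by rw [h]; simp
  simp only [Multiset.insert_eq_cons, Multiset.mem_cons, Multiset.mem_singleton] at hr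
  rcases hr with hr | hr
  · subst hr
    left
    refine ⟨rfl, ?_⟩
    have := (Multiset.cons_inj_right r).mp h
    simpa using this.symm
  · subst hr
    right
    refine ⟨rfl, ?_⟩
    rw [Multiset.pair_comm] at h
    have := (Multiset.cons_inj_right r).mp h
    simpa using this.symm

lemma lemB (x y : Fin 3 → ℝ) (h : ({x 0, x 1, x 2} : Multiset ℝ) = {y 0, y 1, y 2}) :
    ∃ σ : Equiv.Perm (Fin 3), ∀ i, y i = x (σ i) := by
  have hy0 : y 0 ∈ ({x 0, x 1, x 2} : Multiset ℝ) := by rw [h]; simp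
  simp only [Multiset.insert_eq_cons, Multiset.mem_cons, Multiset.mem_singleton] at hy0
  rcases hy0 with h0 | h0 | h0
  · rw [← h0] at h
    have h' : ({x 1, x 2} : Multiset ℝ) = {y 1, y 2} := (Multiset.cons_inj_right (y 0)).mp h
    rcases pair_eq _ _ _ _ h' with ⟨h1, h2⟩ | ⟨h1, h2⟩
    · exact ⟨1, by intro i; fin_cases i <;> simp [h0, h1, h2]⟩
    · refine ⟨Equiv.swap 1 2, ?_⟩
      intro i; fin_cases i <;> simp_all [Equiv.swap_apply_def]
  · have hre : ({x 0, x 1, x 2} : Multiset ℝ) = x 1 ::ₘ {x 0, x 2} := by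
      simp only [Multiset.insert_eq_cons]; rw [Multiset.cons_swap]
    rw [hre, ← h0] at h
    have h' : ({x 0, x 2} : Multiset ℝ) = {y 1, y 2} := (Multiset.cons_inj_right (y 0)).mp h
    rcases pair_eq _ _ _ _ h' with ⟨h1, h2⟩ | ⟨h1, h2⟩
    · refine ⟨Equiv.swap 0 1, ?_⟩
      intro i; fin_cases i <;> simp_all [Equiv.swap_apply_def]
    · refine ⟨Equiv.swap 0 1 * Equiv.swap 1 2, ?_⟩
      intro i; fin_cases i <;> simp_all [Equiv.swap_apply_def]
  · have hre : ({x 0, x 1, x 2} : Multiset ℝ) = x 2 ::ₘ {x 0, x 1} := tri_rot _ _ _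
    rw [hre, ← h0] at h
    have h' : ({x 0, x 1} : Multiset ℝ) = {y 1, y 2} := (Multiset.cons_inj_right (y 0)).mp h
    rcases pair_eq _ _ _ _ h' with ⟨h1, h2⟩ | ⟨h1, h2⟩
    · refine ⟨Equiv.swap 0 1 * Equiv.swap 0 2, ?_⟩
      intro i; fin_cases i <;> simp_all [Equiv.swap_apply_def]
    · refine ⟨Equiv.swap 0 2, ?_⟩
      intro i; fin_cases i <;> simp_all [Equiv.swap_apply_def]

lemma mulVec_entry (σ : Equiv.Perm (Fin 3)) (ε : Fin 3 → ℝ)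
    (g : Matrix (Fin 3) (Fin 3) ℝ) (hg : ∀ i j, g i j = if j = σ i then ε i else 0)
    (v : V3) (i : Fin 3) : g.mulVec v i = ε i * v (σ i) := by
  simp only [Matrix.mulVec, dotProduct, hg, ite_mul, zero_mul]
  rw [Finset.sum_ite_eq' Finset.univ (σ i) (fun j => ε i * v j)]
  simp


/-- Every `3 × 3` signed permutation matrix maps the Peres set to itself, and any two
rays of `PS` of the same type (spanned by vectors with the same multiset of absolute
values of coordinates) are related by a signed permutation matrix. -/
theorem stmt8_symmetries_of_peres_set :
    (∀ g : Matrix (Fin 3) (Fin 3) ℝ, IsSignedPerm g →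
      ∀ L ∈ PeresSet, Submodule.map g.mulVecLin L ∈ PeresSet) ∧
    (∀ L ∈ PeresSet, ∀ M ∈ PeresSet,
      (∃ a b : V3, a ≠ 0 ∧ b ≠ 0 ∧ L = Submodule.span ℝ {a} ∧ M = Submodule.span ℝ {b} ∧
        absCoords a = absCoords b) →
      ∃ g : Matrix (Fin 3) (Fin 3) ℝ, IsSignedPerm g ∧ Submodule.map g.mulVecLin L = M) := by
  constructor
  · intro g hg L hL
    obtain ⟨σ, ε, hε, hgm⟩ := hg
    obtain ⟨v, hv0, rfl, htype⟩ := hL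
    have key : ∀ i, g.mulVec v i = ε i * v (σ i) := mulVec_entry σ ε g hgm v
    have hεne : ∀ i, ε i ≠ 0 := by intro i; rcases hε i with h | h <;> rw [h] <;> norm_num
    refine ⟨g.mulVec v, ?_, ?_, ?_⟩
    · intro hw
      apply hv0
      funext j
      have h1 := congrFun hw (σ⁻¹ j)
      rw [key] at h1
      have h2 : v (σ (σ⁻¹ j)) = 0 := by
        rcases mul_eq_zero.mp h1 with h | h
        · exact absurd h (hεne _)
        · exact h
      simpa using h2
    · rw [Submodule.map_span, Set.image_singleton, Matrix.mulVecLin_apply]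
    · have hε1 : ∀ i, |ε i| = 1 := by intro i; rcases hε i with h | h <;> rw [h] <;> norm_num
      have habs : absCoords (g.mulVec v) = absCoords v := by
        unfold absCoords
        rw [key 0, key 1, key 2, abs_mul, abs_mul, abs_mul, hε1, hε1, hε1,
          one_mul, one_mul, one_mul]
        exact lemA (fun i => |v i|) σ
      rw [habs]
      exact htype
  · rintro L _ M _ ⟨a, b, _, _, hLa, hMb, hab⟩
    obtain ⟨σ, hσ⟩ := lemB (fun i => |a i|) (fun i => |b i|) hab
    set ε : Fin 3 → ℝ := fun i => if a (σ i) = 0 then 1 else b i / a (σ i) with hεdef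
    set g : Matrix (Fin 3) (Fin 3) ℝ := fun i j => if j = σ i then ε i else 0 with hgdef
    have hgm : ∀ i j, g i j = if j = σ i then ε i else 0 := fun i j => rfl
    have hε : ∀ i, ε i = 1 ∨ ε i = -1 := by
      intro i
      by_cases hz : a (σ i) = 0
      · left; simp [hεdef, hz]
      · have h1 : |b i / a (σ i)| = 1 := by
          rw [abs_div, ← hσ i, div_self]
          rw [hσ i]
          simpa using hz
        have := (abs_eq (by norm_num : (0:ℝ) ≤ 1)).mp h1
        simpa [hεdef, hz] using this
    have hgv : g.mulVec a = b := by
      funext i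
      rw [mulVec_entry σ ε g hgm a i]
      by_cases hz : a (σ i) = 0
      · have hb : |b i| = 0 := by rw [hσ i, hz, abs_zero]
        rw [hz, mul_zero]
        exact (abs_eq_zero.mp hb).symm
      · simp only [hεdef, hz, if_false]
        field_simp
    refine ⟨g, ⟨σ, ε, hε, hgm⟩, ?_⟩
    rw [hLa, hMb, Submodule.map_span, Set.image_singleton, Matrix.mulVecLin_apply, hgv]


end
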